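/- Let $q = 5$. There exists an integer $r_0 \geq 2$ such that for every integer $r \geq r_0$, every $\mathbb{F}_q$-basis $\{\beta_1, \ldots, \beta_r\}$ of $\mathbb{F}_{q^r}$, and all $c_1, \ldots, c_r \in \mathbb{F}_q$, the set $\mathcal{S}_{\mathcal{C}}^{\ast}$ of nonzero elements $\sum_{i=1}^r a_i\beta_i$ with $a_i \neq c_i$ for all $i$ contains a primitive element of $\mathbb{F}_{q^r}$. -/

import Mathlib

open Finset ArithmeticFunction
open scoped ArithmeticFunction.zeta

namespace Prim5

lemma geom_sum_root (z : ℂ) (d : ℕ) (hz : z ^ d = 1) :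
    ∑ j ∈ range d, z ^ j = if z = 1 then (d : ℂ) else 0 := by
  split_ifs with h
  · simp [h]
  · rw [geom_sum_eq h d, hz]
    simp

lemma sum_moebius_divisors (k : ℕ) (hk : k ≠ 0) :
    ∑ d ∈ k.divisors, (ArithmeticFunction.moebius d : ℤ) = if k = 1 then 1 else 0 := by
  calc ∑ d ∈ k.divisors, (ArithmeticFunction.moebius d : ℤ)
      = (ArithmeticFunction.moebius * ↑(ArithmeticFunction.zeta) : ArithmeticFunction ℤ) k :=
        ArithmeticFunction.coe_mul_zeta_apply.symm
    _ = (1 : ArithmeticFunction ℤ) k := by rw [ArithmeticFunction.moebius_mul_coe_zeta]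
    _ = if k = 1 then 1 else 0 := ArithmeticFunction.one_apply

/-- product of distinct numbers ≥ 2 is at least `(card + 1)!` -/
lemma factorial_le_prod (P : Finset ℕ) (hP : ∀ p ∈ P, 2 ≤ p) :
    (P.card + 1).factorial ≤ ∏ p ∈ P, p := by
  induction P using Finset.induction_on_max with
  | empty => simp
  | insert a s ha ih =>
    have h2 : ∀ p ∈ s, 2 ≤ p := fun p hp => hP p (Finset.mem_insert_of_mem hp)
    have hanotin : a ∉ s := fun h => lt_irrefl a (ha a h)
    have hsub : s ⊆ Finset.Ico 2 a := by
      intro p hp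
      exact Finset.mem_Ico.mpr ⟨h2 p hp, ha p hp⟩
    have hcard : s.card ≤ a - 2 := by
      simpa [Nat.card_Ico] using Finset.card_le_card hsub
    have ha2 : 2 ≤ a := hP a (Finset.mem_insert_self a s)
    have hge : s.card + 2 ≤ a := by omega
    rw [Finset.prod_insert hanotin, Finset.card_insert_of_notMem hanotin]
    calc (s.card + 1 + 1).factorial = (s.card + 2) * (s.card + 1).factorial := by
          rw [← Nat.factorial_succ]
      _ ≤ a * ∏ p ∈ s, p := Nat.mul_le_mul hge (ih h2)

/-- The number of distinct prime factors of numbers `≤ 5 ^ r` is eventually `< r / 50`. -/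
lemma omega_small : ∃ R : ℕ, ∀ r : ℕ, R ≤ r → ∀ n : ℕ, n ≠ 0 → n ≤ 5 ^ r →
    50 * n.primeFactors.card < r := by
  obtain ⟨M, hM⟩ := Filter.eventually_atTop.mp (Nat.eventually_pow_lt_factorial_sub (5 ^ 50) 1)
  refine ⟨50 * M + 50, fun r hr n hn hn5 => ?_⟩
  set om := n.primeFactors.card with hω
  by_contra hcon
  push_neg at hcon
  have hMω : M ≤ om := by omega
  have h1 : (om + 1).factorial ≤ n := by
    calc (om + 1).factorial ≤ ∏ p ∈ n.primeFactors, p :=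
          factorial_le_prod _ (fun p hp => (Nat.prime_of_mem_primeFactors hp).two_le)
      _ ≤ n := Nat.le_of_dvd (Nat.pos_of_ne_zero hn) (Nat.prod_primeFactors_dvd n)
  have h2 : (5 ^ 50) ^ (om + 1) < om.factorial := by
    simpa using hM (om + 1) (by omega)
  have h3 : om.factorial ≤ (om + 1).factorial := Nat.factorial_le (by omega)
  have h4 : (5:ℕ) ^ r ≤ (5 ^ 50) ^ (om + 1) := by
    rw [← pow_mul]
    exact Nat.pow_le_pow_right (by norm_num) (by omega)
  omega

noncomputable def mdiv : ArithmeticFunction ℝ :=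
  ArithmeticFunction.pdiv ((moebius : ArithmeticFunction ℤ) : ArithmeticFunction ℝ)
    ((ArithmeticFunction.id : ArithmeticFunction ℕ) : ArithmeticFunction ℝ)

lemma mdiv_apply (d : ℕ) : mdiv d = (moebius d : ℝ) / d := by
  simp [mdiv, ArithmeticFunction.pdiv_apply, div_eq_mul_inv]

lemma mdiv_mult : mdiv.IsMultiplicative :=
  (isMultiplicative_moebius.intCast).pdiv (isMultiplicative_id.natCast)

lemma sum_mdiv_prime_pow {p k : ℕ} (hp : p.Prime) (hk : 1 ≤ k) :
    ∑ d ∈ (p ^ k).divisors, mdiv d = 1 - 1 / (p : ℝ) := by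
  rw [Nat.sum_divisors_prime_pow hp]
  induction k with
  | zero => omega
  | succ k ih =>
    rcases Nat.eq_or_lt_of_le hk with h1 | h2
    · have hk0 : k = 0 := by omega
      subst hk0
      rw [Finset.sum_range_succ, Finset.sum_range_one, mdiv_apply, mdiv_apply]
      rw [pow_zero, pow_one, moebius_apply_one, moebius_apply_prime hp]
      have hp0 : (p : ℝ) ≠ 0 := by exact_mod_cast hp.ne_zero
      field_simp
      ring
    · have hk' : 1 ≤ k := by omega
      rw [Finset.sum_range_succ, ih hk']
      have hz : mdiv (p ^ (k + 1)) = 0 := by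
        rw [mdiv_apply, moebius_apply_prime_pow hp (by omega : k + 1 ≠ 0)]
        rw [if_neg (by omega : ¬ k + 1 = 1)]
        simp
      rw [hz, add_zero]

lemma sum_moebius_div (n : ℕ) (hn : n ≠ 0) :
    ∑ d ∈ n.divisors, (moebius d : ℝ) / d = ∏ p ∈ n.primeFactors, (1 - 1 / (p : ℝ)) := by
  have hms : (mdiv * (ζ : ArithmeticFunction ℝ)).IsMultiplicative :=
    mdiv_mult.mul (isMultiplicative_zeta.natCast)
  have h1 : (mdiv * (ζ : ArithmeticFunction ℝ)) n = ∑ d ∈ n.divisors, mdiv d :=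
    ArithmeticFunction.coe_mul_zeta_apply
  have h2 := hms.multiplicative_factorization _ hn
  rw [h1] at h2
  have h3 : ∀ p ∈ n.primeFactors,
      (mdiv * (ζ : ArithmeticFunction ℝ)) (p ^ n.factorization p) = 1 - 1 / (p : ℝ) := by
    intro p hp
    rw [ArithmeticFunction.coe_mul_zeta_apply]
    exact sum_mdiv_prime_pow (Nat.prime_of_mem_primeFactors hp)
      ((Nat.Prime.factorization_pos_of_dvd (Nat.prime_of_mem_primeFactors hp) hn
        (Nat.dvd_of_mem_primeFactors hp)))
  calc ∑ d ∈ n.divisors, (moebius d : ℝ) / d = ∑ d ∈ n.divisors, mdiv d := by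
        simp [mdiv_apply]
    _ = n.factorization.prod fun p k => (mdiv * (ζ : ArithmeticFunction ℝ)) (p ^ k) := h2
    _ = ∏ p ∈ n.primeFactors, (mdiv * (ζ : ArithmeticFunction ℝ)) (p ^ n.factorization p) := by
        rw [Nat.prod_factorization_eq_prod_primeFactors]
    _ = ∏ p ∈ n.primeFactors, (1 - 1 / (p : ℝ)) := Finset.prod_congr rfl h3

lemma sum_abs_moebius_le (n : ℕ) (hn : n ≠ 0) :
    ∑ d ∈ n.divisors, |(moebius d : ℝ)| ≤ 2 ^ n.primeFactors.card := by
  classical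
  have h1 : ∑ d ∈ n.divisors, |(moebius d : ℝ)|
      = ((n.divisors.filter Squarefree).card : ℝ) := by
    rw [← Finset.sum_filter_add_sum_filter_not n.divisors Squarefree]
    have hz : ∑ d ∈ n.divisors.filter (fun d => ¬ Squarefree d), |(moebius d : ℝ)| = 0 := by
      refine Finset.sum_eq_zero fun d hd => ?_
      rw [Finset.mem_filter] at hd
      simp [moebius_eq_zero_of_not_squarefree hd.2]
    rw [hz, add_zero, Finset.card_eq_sum_ones, Nat.cast_sum]
    refine Finset.sum_congr rfl fun d hd => ?_
    rw [Finset.mem_filter] at hd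
    rw [moebius_apply_of_squarefree hd.2]
    push_cast
    rw [abs_pow]
    simp
  rw [h1]
  have h2 : (n.divisors.filter Squarefree).card ≤ n.primeFactors.powerset.card := by
    apply Finset.card_le_card_of_injOn (fun d => d.primeFactors)
    · intro d hd
      rw [Finset.mem_coe, Finset.mem_powerset]
      rw [Finset.mem_coe, Finset.mem_filter, Nat.mem_divisors] at hd
      exact Nat.primeFactors_mono hd.1.1 hn
    · intro d hd d' hd' he
      simp only [Finset.coe_filter, Set.mem_setOf_eq, Nat.mem_divisors] at hd hd'
      dsimp only at he
      rw [← Nat.prod_primeFactors_of_squarefree hd.2, ← Nat.prod_primeFactors_of_squarefree hd'.2,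
        he]
  rw [Finset.card_powerset] at h2
  calc ((n.divisors.filter Squarefree).card : ℝ) ≤ (2 ^ n.primeFactors.card : ℕ) := by
        exact_mod_cast h2
    _ = 2 ^ n.primeFactors.card := by push_cast; ring

lemma addChar_map_sum {ι A M : Type*} [AddCommMonoid A] [CommMonoid M] (ψ : AddChar A M)
    (s : Finset ι) (f : ι → A) : ψ (∑ i ∈ s, f i) = ∏ i ∈ s, ψ (f i) := by
  classical
  induction s using Finset.cons_induction with
  | empty => simp
  | cons a s ha ih => rw [Finset.sum_cons, Finset.prod_cons, AddChar.map_add_eq_mul, ih]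

lemma addChar_norm {A : Type*} [AddCommGroup A] [Fintype A] (ψ : AddChar A ℂ) (a : A) :
    ‖ψ a‖ = 1 := by
  have h : (ψ a) ^ (Fintype.card A) = 1 := by
    rw [← AddChar.map_nsmul_eq_pow, card_nsmul_eq_zero, AddChar.map_zero_eq_one]
  exact Complex.norm_eq_one_of_pow_eq_one h Fintype.card_ne_zero

lemma norm_gaussSum_le {E : Type*} [Field E] [Fintype E] [DecidableEq E]
    {χ : MulChar E ℂ} (hχ : χ ≠ 1) {ψ : AddChar E ℂ} (hψ : ψ ≠ 1) :
    ‖gaussSum χ ψ‖ ≤ Real.sqrt (Fintype.card E) := by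
  have hprim : ψ.IsPrimitive := AddChar.IsPrimitive.of_ne_one hψ
  have key : gaussSum χ ψ * gaussSum χ⁻¹ ψ⁻¹ = (Fintype.card E : ℂ) :=
    gaussSum_mul_gaussSum_eq_card hχ hprim
  have hconj : gaussSum χ⁻¹ ψ⁻¹ = starRingEnd ℂ (gaussSum χ ψ) := by
    rw [gaussSum, gaussSum, map_sum]
    refine Finset.sum_congr rfl fun x _ => ?_
    rw [map_mul, ← MulChar.star_apply']
    congr 1
    rw [AddChar.inv_apply', ← Complex.inv_eq_conj (addChar_norm ψ x)]
  rw [hconj, Complex.mul_conj] at key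
  have hsq : Complex.normSq (gaussSum χ ψ) = (Fintype.card E : ℝ) := by
    exact_mod_cast key
  rw [Complex.norm_def, hsq]

lemma cube_bound {F E : Type*} [Field F] [Fintype F] [DecidableEq F] [Field E] [Fintype E]
    [DecidableEq E] [Algebra F E] (hF : Fintype.card F = 5) {r : ℕ}
    (B : Module.Basis (Fin r) F E) (c : Fin r → F)
    (ψ : AddChar F ℂ) (horth : ∀ b : F, ∑ t : F, ψ (t * b) = if b = 0 then (5 : ℂ) else 0)
    (hψne : ψ ≠ 1)
    (χ : MulChar E ℂ) (hχ : χ ≠ 1) :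
    ‖∑ x ∈ Finset.univ.filter (fun x : E => ∀ i, B.repr x i ≠ c i), χ x‖
      ≤ (8 / 5 : ℝ) ^ r * Real.sqrt (Fintype.card E) := by
  classical
  set w : F → ℂ := fun t => (if t = 0 then 1 else 0) - 1 / 5 with hw
  have hstep1 : ∀ u : F, ∑ t : F, w t * ψ (t * u) = if u = 0 then 0 else 1 := by
    intro u
    have hpt : ∀ t : F, w t * ψ (t * u)
        = (if t = 0 then ψ (t * u) else 0) - (1 / 5 : ℂ) * ψ (t * u) := by
      intro t
      simp only [hw]
      split_ifs <;> ring
    rw [Finset.sum_congr rfl fun t _ => hpt t, Finset.sum_sub_distrib, ← Finset.mul_sum, horth u]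
    have h0 : ∑ t : F, (if t = 0 then ψ (t * u) else 0) = ψ (0 * u) := by
      rw [Finset.sum_ite_eq' Finset.univ (0 : F) fun t => ψ (t * u)]
      simp
    rw [h0, zero_mul, AddChar.map_zero_eq_one]
    split_ifs with h <;> norm_num
  have hψnorm : ∀ a : F, ‖ψ a‖ = 1 := addChar_norm ψ
  have hwnorm : ∀ s : F, ‖w s‖ = if s = 0 then (4 / 5 : ℝ) else (1 / 5 : ℝ) := by
    intro s
    simp only [hw]
    split_ifs with h
    · have h1 : (1 : ℂ) - 1 / 5 = ((4 / 5 : ℝ) : ℂ) := by norm_num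
      rw [h1, Complex.norm_real]
      norm_num
    · have h1 : (0 : ℂ) - 1 / 5 = ((-(1 / 5) : ℝ) : ℂ) := by norm_num
      rw [h1, Complex.norm_real]
      norm_num
  have hwsum : ∑ s : F, ‖w s‖ = (8 / 5 : ℝ) := by
    calc ∑ s : F, ‖w s‖ = ∑ s : F, ((1 / 5 : ℝ) + if s = 0 then (3 / 5 : ℝ) else 0) := by
          refine Finset.sum_congr rfl fun s _ => ?_
          rw [hwnorm s]
          split_ifs <;> norm_num
      _ = (8 / 5 : ℝ) := by
          rw [Finset.sum_add_distrib, Finset.sum_const,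
            Finset.sum_ite_eq' Finset.univ (0 : F) fun _ => (3 / 5 : ℝ)]
          simp only [Finset.mem_univ, if_true, Finset.card_univ, hF]
          norm_num
  set L : (Fin r → F) → E → F := fun t x => ∑ i, t i * B.repr x i with hL
  have hLhom : ∀ t : Fin r → F, ∃ f : E →+ F, ∀ x, f x = L t x := by
    intro t
    refine ⟨(∑ i, t i • B.coord i : E →ₗ[F] F).toAddMonoidHom, fun x => ?_⟩
    simp [LinearMap.sum_apply, LinearMap.smul_apply, Module.Basis.coord_apply, smul_eq_mul, hL]
  have hinner : ∀ t : Fin r → F, t ≠ 0 →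
      ‖∑ x : E, χ x * ψ (L t x)‖ ≤ Real.sqrt (Fintype.card E) := by
    intro t ht
    obtain ⟨f, hf⟩ := hLhom t
    set ψE : AddChar E ℂ := ψ.compAddMonoidHom f with hψE
    have hψEval : ∀ x, ψE x = ψ (L t x) := fun x => by
      rw [hψE, AddChar.compAddMonoidHom_apply, hf]
    have hne : ψE ≠ 1 := by
      obtain ⟨a, ha⟩ := AddChar.ne_one_iff.mp hψne
      obtain ⟨i0, hi0⟩ := Function.ne_iff.mp ht
      have hi0' : t i0 ≠ 0 := by simpa using hi0
      set x0 : E := ((t i0)⁻¹ * a) • B i0 with hx0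
      have hrepr : ∀ i, B.repr x0 i = ((t i0)⁻¹ * a) * (if i0 = i then 1 else 0) := by
        intro i
        rw [hx0, map_smul, B.repr_self]
        rw [Finsupp.smul_apply, Finsupp.single_apply, smul_eq_mul]
      have hLx0 : L t x0 = a := by
        rw [hL]
        simp only [hrepr]
        simp only [mul_ite, mul_one, mul_zero]
        rw [Finset.sum_ite_eq Finset.univ i0 fun i => t i * ((t i0)⁻¹ * a)]
        simp only [Finset.mem_univ, if_true]
        rw [← mul_assoc, mul_inv_cancel₀ hi0', one_mul]
      intro hcon
      have hx : ψE x0 = 1 := by rw [hcon, AddChar.one_apply]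
      rw [hψEval, hLx0] at hx
      exact ha hx
    have hgauss : ∑ x : E, χ x * ψ (L t x) = gaussSum χ ψE := by
      rw [gaussSum]
      exact Finset.sum_congr rfl fun x _ => by rw [hψEval]
    rw [hgauss]
    exact norm_gaussSum_le hχ hne
  have hzero : ∑ x : E, χ x * ψ (L 0 x) = 0 := by
    have h1 : ∀ x : E, ψ (L 0 x) = 1 := by
      intro x
      have : L 0 x = 0 := by simp [hL]
      rw [this, AddChar.map_zero_eq_one]
    rw [Finset.sum_congr rfl fun x _ => by rw [h1 x, mul_one]]
    exact MulChar.sum_eq_zero_of_ne_one hχ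
  have hT : ∑ x ∈ Finset.univ.filter (fun x : E => ∀ i, B.repr x i ≠ c i), χ x
      = ∑ t : Fin r → F,
          ((∏ i, w (t i)) * ψ (- ∑ i, t i * c i)) * (∑ x : E, χ x * ψ (L t x)) := by
    calc ∑ x ∈ Finset.univ.filter (fun x : E => ∀ i, B.repr x i ≠ c i), χ x
        = ∑ x : E, χ x * (if (∀ i, B.repr x i ≠ c i) then 1 else 0) := by
          rw [Finset.sum_filter]
          exact Finset.sum_congr rfl fun x _ => by split_ifs <;> simp
      _ = ∑ x : E, χ x * ∏ i, ∑ s : F, w s * ψ (s * (B.repr x i - c i)) := by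
          refine Finset.sum_congr rfl fun x _ => ?_
          congr 1
          have h1 : ∀ i : Fin r, (if B.repr x i ≠ c i then (1 : ℂ) else 0)
              = ∑ s : F, w s * ψ (s * (B.repr x i - c i)) := by
            intro i
            rw [hstep1 (B.repr x i - c i)]
            by_cases h : B.repr x i = c i
            · rw [if_pos (sub_eq_zero_of_eq h), if_neg (not_not.mpr h)]
            · rw [if_neg (sub_ne_zero_of_ne h), if_pos h]
          calc (if (∀ i, B.repr x i ≠ c i) then (1 : ℂ) else 0)
              = ∏ i, (if B.repr x i ≠ c i then (1 : ℂ) else 0) := by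
                by_cases h : ∀ i, B.repr x i ≠ c i
                · rw [if_pos h, Finset.prod_congr rfl (fun i _ => if_pos (h i))]
                  simp
                · rw [if_neg h]
                  push_neg at h
                  obtain ⟨i0, hi0⟩ := h
                  exact (Finset.prod_eq_zero (Finset.mem_univ i0)
                    (by rw [if_neg (not_not.mpr hi0)])).symm
            _ = ∏ i, ∑ s : F, w s * ψ (s * (B.repr x i - c i)) :=
                Finset.prod_congr rfl fun i _ => h1 i
      _ = ∑ x : E, χ x * ∑ t : Fin r → F, ∏ i, (w (t i) * ψ (t i * (B.repr x i - c i))) := by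
          refine Finset.sum_congr rfl fun x _ => ?_
          rw [Finset.prod_univ_sum, Fintype.piFinset_univ]
      _ = ∑ x : E, ∑ t : Fin r → F, χ x * ∏ i, (w (t i) * ψ (t i * (B.repr x i - c i))) :=
          Finset.sum_congr rfl fun x _ => Finset.mul_sum _ _ _
      _ = ∑ t : Fin r → F, ∑ x : E, χ x * ∏ i, (w (t i) * ψ (t i * (B.repr x i - c i))) :=
          Finset.sum_comm
      _ = ∑ t : Fin r → F,
            ((∏ i, w (t i)) * ψ (- ∑ i, t i * c i)) * (∑ x : E, χ x * ψ (L t x)) := by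
          refine Finset.sum_congr rfl fun t _ => ?_
          rw [Finset.mul_sum]
          refine Finset.sum_congr rfl fun x _ => ?_
          rw [Finset.prod_mul_distrib]
          rw [← addChar_map_sum ψ Finset.univ (fun i => t i * (B.repr x i - c i))]
          have hsum : ∑ i, t i * (B.repr x i - c i) = L t x + (- ∑ i, t i * c i) := by
            rw [hL]
            dsimp only
            rw [← Finset.sum_neg_distrib]
            rw [← Finset.sum_add_distrib]
            refine Finset.sum_congr rfl fun i _ => ?_
            ring
          rw [hsum, AddChar.map_add_eq_mul]
          ring
  rw [hT]
  have hsqrt0 : (0 : ℝ) ≤ Real.sqrt (Fintype.card E) := Real.sqrt_nonneg _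
  calc ‖∑ t : Fin r → F,
          ((∏ i, w (t i)) * ψ (- ∑ i, t i * c i)) * (∑ x : E, χ x * ψ (L t x))‖
      ≤ ∑ t : Fin r → F,
          ‖((∏ i, w (t i)) * ψ (- ∑ i, t i * c i)) * (∑ x : E, χ x * ψ (L t x))‖ :=
        norm_sum_le _ _
    _ ≤ ∑ t : Fin r → F, (∏ i, ‖w (t i)‖) * Real.sqrt (Fintype.card E) := by
        refine Finset.sum_le_sum fun t _ => ?_
        rw [norm_mul, norm_mul, norm_prod, hψnorm, mul_one]
        by_cases ht : t = 0
        · subst ht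
          rw [hzero, norm_zero, mul_zero]
          positivity
        · exact mul_le_mul_of_nonneg_left (hinner t ht) (by positivity)
    _ = (∑ s : F, ‖w s‖) ^ r * Real.sqrt (Fintype.card E) := by
        rw [← Finset.sum_mul]
        congr 1
        have h2 : ∑ t : Fin r → F, ∏ i, ‖w (t i)‖ = ∏ i : Fin r, ∑ s : F, ‖w s‖ := by
          rw [Finset.prod_univ_sum]
          rw [Fintype.piFinset_univ]
        rw [h2, Finset.prod_const, Finset.card_univ, Fintype.card_fin]
    _ = (8 / 5 : ℝ) ^ r * Real.sqrt (Fintype.card E) := by rw [hwsum]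

lemma exists_addChar (F : Type*) [Field F] [Fintype F] [DecidableEq F]
    (hF : Fintype.card F = 5) :
    ∃ ψ : AddChar F ℂ, (∀ b : F, ∑ t : F, ψ (t * b) = if b = 0 then (5 : ℂ) else 0) ∧ ψ ≠ 1 := by
  have hp : Nat.Prime 5 := by norm_num
  have hprim5 : IsPrimitiveRoot (Complex.exp (2 * Real.pi * Complex.I / 5)) 5 :=
    Complex.isPrimitiveRoot_exp 5 (by norm_num)
  have h5 : (Complex.exp (2 * Real.pi * Complex.I / 5)) ^ (5 : ℕ) = 1 := hprim5.pow_eq_one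
  let e : ZMod 5 ≃+* F := ZMod.ringEquivOfPrime F hp hF
  let ψ0 : AddChar (ZMod 5) ℂ := AddChar.zmodChar 5 h5
  let ψ : AddChar F ℂ := ψ0.compAddMonoidHom e.symm.toAddEquiv.toAddMonoidHom
  have hψval : ∀ a : F, ψ a = ψ0 (e.symm a) := fun a => rfl
  have hne : ψ ≠ 1 := by
    intro hcon
    have h1 : ψ (e 1) = 1 := by rw [hcon, AddChar.one_apply]
    rw [hψval] at h1
    have he1 : e.symm (e 1) = 1 := e.symm_apply_apply 1
    rw [he1] at h1
    rw [AddChar.zmodChar_apply, show (1 : ZMod 5).val = 1 from rfl] at h1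
    rw [pow_one] at h1
    exact hprim5.ne_one (by norm_num) h1
  refine ⟨ψ, fun b => ?_, hne⟩
  have hprim : ψ.IsPrimitive := AddChar.IsPrimitive.of_ne_one hne
  have := AddChar.sum_mulShift b hprim
  rw [this, hF]
  split_ifs <;> norm_num

lemma main_lemma {F E : Type*} [Field F] [Fintype F] [DecidableEq F] [Field E] [Fintype E]
    [DecidableEq E] [Algebra F E]
    (hF : Fintype.card F = 5) {r : ℕ} (hr1 : 1 ≤ r)
    (B : Module.Basis (Fin r) F E) (c : Fin r → F)
    (hnum : (2 : ℝ) ^ (5 ^ r - 1 : ℕ).primeFactors.card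
        * ((2 : ℝ) ^ (5 ^ r - 1 : ℕ).primeFactors.card
          * ((8 / 5 : ℝ) ^ r * Real.sqrt ((5 : ℝ) ^ r))) < (4 : ℝ) ^ r - 1) :
    ∃ x : E, (x ≠ 0 ∧ ∀ i, B.repr x i ≠ c i) ∧ orderOf x = 5 ^ r - 1 := by
  classical
  obtain ⟨ψ, horth, hψne⟩ := exists_addChar F hF
  have hcardE : Fintype.card E = 5 ^ r := by
    rw [Module.card_fintype B, hF, Fintype.card_fin]
  have h5r : (5 : ℕ) ≤ 5 ^ r := by
    calc (5 : ℕ) = 5 ^ 1 := (pow_one 5).symm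
      _ ≤ 5 ^ r := Nat.pow_le_pow_right (by norm_num) hr1
  set n := Fintype.card Eˣ with hndef
  have hn : n = 5 ^ r - 1 := by rw [hndef, Fintype.card_units, hcardE]
  have hnpos : 0 < n := by omega
  -- the multiplicative character of maximal order
  obtain ⟨g, hg⟩ := IsCyclic.exists_generator (α := Eˣ)
  set zc : ℂ := Complex.exp (2 * Real.pi * Complex.I / n) with hζdef
  have hζ : IsPrimitiveRoot zc n := Complex.isPrimitiveRoot_exp n hnpos.ne'
  have hζunit : IsUnit zc := hζ.isUnit hnpos.ne'
  set u : ℂˣ := hζunit.unit with hudef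
  have hu : (u : ℂ) = zc := hζunit.unit_spec
  have humem : u ∈ rootsOfUnity (Fintype.card Eˣ) ℂ := by
    rw [mem_rootsOfUnity]
    apply Units.ext
    rw [Units.val_pow_eq_pow_val, hu, Units.val_one, ← hndef]
    exact hζ.pow_eq_one
  set χ : MulChar E ℂ := MulChar.ofRootOfUnity humem hg with hχdef
  have hχg : χ ↑g = zc := by
    rw [hχdef]
    rw [MulChar.ofRootOfUnity_spec humem hg, hu]
  have hprimu : IsPrimitiveRoot u n := IsPrimitiveRoot.coe_units_iff.mp (by rw [hu]; exact hζ)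
  have hinj : ∀ v : Eˣ, χ ↑v = 1 → v = 1 := by
    intro v hv
    obtain ⟨k, hk⟩ := hg v
    have htu : χ.toUnitHom v = 1 := by
      apply Units.ext
      rw [MulChar.coe_toUnitHom, hv, Units.val_one]
    have hug : χ.toUnitHom g = u := by
      apply Units.ext
      rw [MulChar.coe_toUnitHom, hχg, hu]
    rw [← hk, map_zpow, hug] at htu
    obtain ⟨m, hm⟩ := (hprimu.zpow_eq_one_iff_dvd k).mp htu
    have hgn : g ^ ((n : ℤ) * m) = 1 := by
      rw [zpow_mul, zpow_natCast, hndef, pow_card_eq_one, one_zpow]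
    rw [← hk]
    show g ^ k = 1
    rw [hm]
    exact hgn
  have hord : ∀ m : ℕ, 0 < m → m < n → χ ^ m ≠ 1 := by
    intro m h0 h1 hcon
    have h2 : (χ ^ m) ↑g = (1 : MulChar E ℂ) ↑g := by rw [hcon]
    rw [MulChar.pow_apply_coe, hχg, MulChar.one_apply_coe] at h2
    exact hζ.pow_ne_one_of_pos_of_lt h0.ne' h1 h2
  -- inner geometric sums
  have hind : ∀ (v : Eˣ) (d : ℕ), d ∈ n.divisors →
      (∑ j ∈ Finset.range d, (χ ↑v) ^ (j * (n / d)))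
        = if v ^ (n / d) = 1 then (d : ℂ) else 0 := by
    intro v d hd
    rw [Nat.mem_divisors] at hd
    have hpow : ∀ j : ℕ, (χ ↑v) ^ (j * (n / d)) = (χ ↑(v ^ (n / d))) ^ j := by
      intro j
      rw [Units.val_pow_eq_pow_val, map_pow, ← pow_mul, mul_comm (n / d) j]
    rw [Finset.sum_congr rfl fun j _ => hpow j]
    have hzd : (χ ↑(v ^ (n / d))) ^ d = 1 := by
      rw [← map_pow, ← Units.val_pow_eq_pow_val, ← pow_mul, Nat.div_mul_cancel hd.1, hndef,
        pow_card_eq_one, Units.val_one, map_one]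
    rw [geom_sum_root _ d hzd]
    have hiff : (χ ↑(v ^ (n / d))) = 1 ↔ v ^ (n / d) = 1 := by
      constructor
      · exact fun h => hinj _ h
      · intro h; rw [h, Units.val_one, map_one]
    rw [if_congr hiff rfl rfl]
  -- pointwise Möbius identity
  have hmob : ∀ x : E,
      (∑ d ∈ n.divisors, ((moebius d : ℂ) / d)
        * ∑ j ∈ Finset.range d, (χ ^ (j * (n / d))) x)
      = if IsUnit x ∧ orderOf x = n then 1 else 0 := by
    intro x
    by_cases hx : IsUnit x
    · obtain ⟨v, rfl⟩ := hx
      have hvord : orderOf (v : E) = orderOf v := orderOf_units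
      have hO : orderOf v ∣ n := by rw [hndef]; exact orderOf_dvd_card
      have hdivpos : 0 < n / orderOf v :=
        Nat.div_pos (Nat.le_of_dvd hnpos hO) (orderOf_pos v)
      calc ∑ d ∈ n.divisors, ((moebius d : ℂ) / d)
              * ∑ j ∈ Finset.range d, (χ ^ (j * (n / d))) ↑v
          = ∑ d ∈ n.divisors, ((moebius d : ℂ) / d)
              * (if v ^ (n / d) = 1 then (d : ℂ) else 0) := by
            refine Finset.sum_congr rfl fun d hd => ?_
            congr 1
            rw [Finset.sum_congr rfl fun j _ => MulChar.pow_apply_coe χ (j * (n / d)) v]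
            exact hind v d hd
        _ = ∑ d ∈ n.divisors, (if v ^ (n / d) = 1 then (moebius d : ℂ) else 0) := by
            refine Finset.sum_congr rfl fun d hd => ?_
            have hd0 : (d : ℂ) ≠ 0 := by
              exact_mod_cast (Nat.pos_of_mem_divisors hd).ne'
            split_ifs with h
            · field_simp
            · rw [mul_zero]
        _ = ∑ d ∈ n.divisors.filter (fun d => d ∣ n / orderOf v), (moebius d : ℂ) := by
            rw [Finset.sum_filter]
            refine Finset.sum_congr rfl fun d hd => ?_
            have hdn : d ∣ n := (Nat.mem_divisors.mp hd).1
            have hiff : v ^ (n / d) = 1 ↔ d ∣ n / orderOf v := by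
              rw [← orderOf_dvd_iff_pow_eq_one, Nat.dvd_div_iff_mul_dvd hdn, Nat.dvd_div_iff_mul_dvd hO,
                mul_comm]
            rw [if_congr hiff rfl rfl]
        _ = ∑ d ∈ (n / orderOf v).divisors, (moebius d : ℂ) := by
            rw [Nat.divisors_filter_dvd_of_dvd hnpos.ne' (Nat.div_dvd_of_dvd hO)]
        _ = if IsUnit (v : E) ∧ orderOf (v : E) = n then 1 else 0 := by
            have hcast : ∑ d ∈ (n / orderOf v).divisors, (moebius d : ℂ)
                = ((∑ d ∈ (n / orderOf v).divisors, moebius d : ℤ) : ℂ) := by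
              push_cast
              rfl
            rw [hcast, sum_moebius_divisors _ hdivpos.ne']
            have hcond : (n / orderOf v = 1) ↔ (IsUnit (v : E) ∧ orderOf (v : E) = n) := by
              constructor
              · intro h
                refine ⟨Units.isUnit v, ?_⟩
                rw [hvord]
                have h2 := Nat.mul_div_cancel' hO
                rw [h, mul_one] at h2
                exact h2
              · rintro ⟨-, h⟩
                rw [hvord] at h
                rw [h]
                exact Nat.div_self hnpos
            rw [if_congr hcond rfl rfl]
            split_ifs <;> norm_num
    · have hz : ∀ m : ℕ, (χ ^ m) x = 0 := fun m => MulChar.map_nonunit _ hx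
      simp only [hz, Finset.sum_const_zero, mul_zero]
      rw [if_neg (fun hcon => hx hcon.1)]
  -- the sets and counts
  set S : Finset E := Finset.univ.filter (fun x : E => ∀ i, B.repr x i ≠ c i) with hSdef
  set om := n.primeFactors.card with hωdef
  set G : ℝ := (8 / 5 : ℝ) ^ r * Real.sqrt ((5 : ℝ) ^ r) with hGdef
  have hG0 : 0 ≤ G := by positivity
  have hcube : ∀ χ' : MulChar E ℂ, χ' ≠ 1 → ‖∑ x ∈ S, χ' x‖ ≤ G := by
    intro χ' hχ'
    have h := cube_bound hF B c ψ horth hψne χ' hχ'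
    have hsq : ((Fintype.card E : ℕ) : ℝ) = (5 : ℝ) ^ r := by
      rw [hcardE]
      push_cast
      ring
    rw [hsq] at h
    exact h
  set count := (S.filter (fun x => IsUnit x ∧ orderOf x = n)).card with hcount
  have hkey : (count : ℂ) = ∑ d ∈ n.divisors, ((moebius d : ℂ) / d)
      * ∑ j ∈ Finset.range d, ∑ x ∈ S, (χ ^ (j * (n / d))) x := by
    calc (count : ℂ)
        = ∑ x ∈ S, (if IsUnit x ∧ orderOf x = n then (1 : ℂ) else 0) := by
          rw [Finset.sum_boole, hcount]
      _ = ∑ x ∈ S, ∑ d ∈ n.divisors, ((moebius d : ℂ) / d)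
            * ∑ j ∈ Finset.range d, (χ ^ (j * (n / d))) x :=
          Finset.sum_congr rfl fun x _ => (hmob x).symm
      _ = ∑ d ∈ n.divisors, ∑ x ∈ S, ((moebius d : ℂ) / d)
            * ∑ j ∈ Finset.range d, (χ ^ (j * (n / d))) x := Finset.sum_comm
      _ = ∑ d ∈ n.divisors, ((moebius d : ℂ) / d)
            * ∑ j ∈ Finset.range d, ∑ x ∈ S, (χ ^ (j * (n / d))) x := by
          refine Finset.sum_congr rfl fun d _ => ?_
          rw [← Finset.mul_sum]
          congr 1
          exact Finset.sum_comm
  set s0 := (S.filter (fun x : E => IsUnit x)).card with hs0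
  have hT0 : ∀ d, ∑ x ∈ S, (χ ^ (0 * (n / d))) x = (s0 : ℂ) := by
    intro d
    rw [zero_mul, pow_zero]
    calc ∑ x ∈ S, (1 : MulChar E ℂ) x
        = ∑ x ∈ S, (if IsUnit x then (1 : ℂ) else 0) := by
          refine Finset.sum_congr rfl fun x _ => ?_
          by_cases h : IsUnit x
          · rw [if_pos h]
            obtain ⟨v, rfl⟩ := h
            exact MulChar.one_apply_coe v
          · rw [if_neg h, MulChar.map_nonunit _ h]
      _ = (s0 : ℂ) := by rw [Finset.sum_boole, hs0]
  have hsplit : (count : ℂ) = (∑ d ∈ n.divisors, ((moebius d : ℂ) / d)) * s0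
      + ∑ d ∈ n.divisors, ((moebius d : ℂ) / d)
          * ∑ j ∈ Finset.Ico 1 d, ∑ x ∈ S, (χ ^ (j * (n / d))) x := by
    rw [hkey, Finset.sum_mul, ← Finset.sum_add_distrib]
    refine Finset.sum_congr rfl fun d hd => ?_
    have hdpos : 0 < d := Nat.pos_of_mem_divisors hd
    have hrange : Finset.range d = insert 0 (Finset.Ico 1 d) := by
      ext j
      simp only [Finset.mem_range, Finset.mem_insert, Finset.mem_Ico]
      omega
    rw [hrange, Finset.sum_insert (by simp), hT0 d, mul_add]
  -- bound on the error term
  have herr : ‖(count : ℂ) - (∑ d ∈ n.divisors, ((moebius d : ℂ) / d)) * s0‖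
      ≤ (2 : ℝ) ^ om * G := by
    rw [hsplit, add_sub_cancel_left]
    calc ‖∑ d ∈ n.divisors, ((moebius d : ℂ) / d)
            * ∑ j ∈ Finset.Ico 1 d, ∑ x ∈ S, (χ ^ (j * (n / d))) x‖
        ≤ ∑ d ∈ n.divisors, ‖((moebius d : ℂ) / d)
            * ∑ j ∈ Finset.Ico 1 d, ∑ x ∈ S, (χ ^ (j * (n / d))) x‖ := norm_sum_le _ _
      _ ≤ ∑ d ∈ n.divisors, |(moebius d : ℝ)| * G := by
          refine Finset.sum_le_sum fun d hd => ?_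
          have hdpos : 0 < d := Nat.pos_of_mem_divisors hd
          have hdn : d ∣ n := (Nat.mem_divisors.mp hd).1
          have hq0 : 0 < n / d := Nat.div_pos (Nat.le_of_dvd hnpos hdn) hdpos
          have hTj : ∀ j ∈ Finset.Ico 1 d, ‖∑ x ∈ S, (χ ^ (j * (n / d))) x‖ ≤ G := by
            intro j hj
            rw [Finset.mem_Ico] at hj
            refine hcube _ (hord _ (Nat.mul_pos (by omega) hq0) ?_)
            have h1 : j * (n / d) < d * (n / d) :=
              mul_lt_mul_of_pos_right hj.2 hq0
            rw [Nat.mul_div_cancel' hdn] at h1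
            exact h1
          have hsumj : ‖∑ j ∈ Finset.Ico 1 d, ∑ x ∈ S, (χ ^ (j * (n / d))) x‖
              ≤ (d - 1 : ℝ) * G := by
            calc ‖∑ j ∈ Finset.Ico 1 d, ∑ x ∈ S, (χ ^ (j * (n / d))) x‖
                ≤ ∑ j ∈ Finset.Ico 1 d, ‖∑ x ∈ S, (χ ^ (j * (n / d))) x‖ := norm_sum_le _ _
              _ ≤ ∑ _j ∈ Finset.Ico 1 d, G := Finset.sum_le_sum hTj
              _ = (d - 1 : ℝ) * G := by
                  rw [Finset.sum_const, Nat.card_Ico]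
                  rw [nsmul_eq_mul]
                  congr 1
                  have : 1 ≤ d := hdpos
                  push_cast [this]
                  ring
          have hμ : ‖((moebius d : ℂ) / d)‖ = |(moebius d : ℝ)| / d := by
            rw [norm_div]
            congr 1
            · have : ((moebius d : ℤ) : ℂ) = (((moebius d : ℤ) : ℝ) : ℂ) := by push_cast; rfl
              rw [this, Complex.norm_real, Real.norm_eq_abs]
            · have : ((d : ℕ) : ℂ) = (((d : ℕ) : ℝ) : ℂ) := by push_cast; rfl
              rw [this, Complex.norm_real, Real.norm_eq_abs, abs_of_nonneg (by positivity)]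
          rw [norm_mul, hμ]
          have hd1 : (0 : ℝ) < d := by exact_mod_cast hdpos
          calc |(moebius d : ℝ)| / d * ‖∑ j ∈ Finset.Ico 1 d, ∑ x ∈ S, (χ ^ (j * (n / d))) x‖
              ≤ |(moebius d : ℝ)| / d * ((d - 1 : ℝ) * G) := by
                exact mul_le_mul_of_nonneg_left hsumj (by positivity)
            _ ≤ |(moebius d : ℝ)| * G := by
                rw [div_mul_eq_mul_div, div_le_iff₀ hd1]
                have habs : (0 : ℝ) ≤ |(moebius d : ℝ)| := abs_nonneg _
                nlinarith
      _ ≤ (2 : ℝ) ^ om * G := by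
          rw [← Finset.sum_mul]
          exact mul_le_mul_of_nonneg_right (sum_abs_moebius_le n hnpos.ne') hG0
  -- main term bounds
  set K : ℝ := ∑ d ∈ n.divisors, (moebius d : ℝ) / d with hKdef
  have hK : (1 / 2 : ℝ) ^ om ≤ K := by
    rw [hKdef, sum_moebius_div n hnpos.ne']
    calc (1 / 2 : ℝ) ^ om = ∏ _p ∈ n.primeFactors, (1 / 2 : ℝ) := by
          rw [Finset.prod_const, hωdef]
      _ ≤ ∏ p ∈ n.primeFactors, (1 - 1 / (p : ℝ)) := by
          refine Finset.prod_le_prod (fun p _ => by norm_num) (fun p hp => ?_)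
          have hp2 : (2 : ℝ) ≤ p := by
            exact_mod_cast (Nat.prime_of_mem_primeFactors hp).two_le
          have h1 : 1 / (p : ℝ) ≤ 1 / 2 := by
            apply one_div_le_one_div_of_le (by norm_num) hp2
          linarith
  have hK0 : (0 : ℝ) ≤ K := le_trans (by positivity) hK
  -- cardinality of S
  have hScard : S.card = 4 ^ r := by
    rw [hSdef]
    have h1 : (Finset.univ.filter (fun x : E => ∀ i, B.repr x i ≠ c i)).card
        = Fintype.card {x : E // ∀ i, B.repr x i ≠ c i} := (Fintype.card_subtype _).symm
    rw [h1]
    have e1 : {x : E // ∀ i, B.repr x i ≠ c i} ≃ {a : Fin r → F // ∀ i, a i ≠ c i} :=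
      B.equivFun.toEquiv.subtypeEquiv (fun x => by simp [Module.Basis.equivFun_apply])
    have e2 : {a : Fin r → F // ∀ i, a i ≠ c i} ≃ (∀ i : Fin r, {b : F // b ≠ c i}) :=
      Equiv.subtypePiEquivPi (p := fun i b => b ≠ c i)
    rw [Fintype.card_congr (e1.trans e2), Fintype.card_pi]
    have h3 : ∀ i : Fin r, Fintype.card {b : F // b ≠ c i} = 4 := by
      intro i
      have h4 : Fintype.card {b : F // ¬ b = c i} = Fintype.card F - Fintype.card {b : F // b = c i} :=
        Fintype.card_subtype_compl _
      rw [h4, Fintype.card_subtype_eq, hF]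
    rw [Finset.prod_congr rfl (fun i _ => h3 i), Finset.prod_const, Finset.card_univ,
      Fintype.card_fin]
  have hs0card : (4 : ℝ) ^ r - 1 ≤ (s0 : ℝ) := by
    have h1 : S.card ≤ s0 + 1 := by
      have h2 := Finset.card_filter_add_card_filter_not
        (s := S) (p := fun x : E => IsUnit x)
      have h3 : (S.filter (fun x : E => ¬ IsUnit x)).card ≤ 1 := by
        have hsub : S.filter (fun x : E => ¬ IsUnit x) ⊆ {0} := by
          intro x hx
          rw [Finset.mem_filter] at hx
          rw [Finset.mem_singleton]
          by_contra h
          exact hx.2 (isUnit_iff_ne_zero.mpr h)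
        calc (S.filter (fun x : E => ¬ IsUnit x)).card
            ≤ ({0} : Finset E).card := Finset.card_le_card hsub
          _ = 1 := rfl
      omega
    rw [hScard] at h1
    have h4 : ((4 : ℕ) ^ r : ℝ) ≤ (s0 : ℝ) + 1 := by exact_mod_cast h1
    push_cast at h4
    linarith
  -- conclusion
  have hcast : ((∑ d ∈ n.divisors, ((moebius d : ℂ) / d)) * s0) = ((K * s0 : ℝ) : ℂ) := by
    rw [hKdef]
    push_cast
    ring
  have hreal : |(count : ℝ) - K * s0| ≤ (2 : ℝ) ^ om * G := by
    have h1 := herr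
    rw [hcast] at h1
    have h2 : ((count : ℕ) : ℂ) - ((K * s0 : ℝ) : ℂ) = (((count : ℝ) - K * s0 : ℝ) : ℂ) := by
      push_cast
      ring
    rw [h2, Complex.norm_real, Real.norm_eq_abs] at h1
    exact h1
  have hlow : K * s0 - (2 : ℝ) ^ om * G ≤ (count : ℝ) := by
    have := abs_le.mp hreal
    linarith [this.1]
  have hKs0 : (1 / 2 : ℝ) ^ om * ((4 : ℝ) ^ r - 1) ≤ K * s0 := by
    have h40 : (0 : ℝ) ≤ (4 : ℝ) ^ r - 1 := by
      have h41 : (1 : ℝ) ≤ (4 : ℝ) ^ r := by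
        calc (1 : ℝ) = 1 ^ r := (one_pow r).symm
          _ ≤ (4 : ℝ) ^ r := pow_le_pow_left₀ (by norm_num) (by norm_num) r
      linarith
    exact mul_le_mul hK hs0card h40 hK0
  have hω' : om = (5 ^ r - 1 : ℕ).primeFactors.card := by rw [hωdef, hn]
  have hnum' : (2 : ℝ) ^ om * ((2 : ℝ) ^ om * G) < (4 : ℝ) ^ r - 1 := by
    rw [hω', hGdef]
    exact hnum
  have hfin : (0 : ℝ) < (count : ℝ) := by
    have h2pos : (0 : ℝ) < (2 : ℝ) ^ om := by positivity
    have hhalf : (1 / 2 : ℝ) ^ om = ((2 : ℝ) ^ om)⁻¹ := by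
      rw [div_pow, one_pow, one_div]
    have hmul := mul_lt_mul_of_pos_left hnum' (inv_pos.mpr h2pos)
    rw [inv_mul_cancel_left₀ (ne_of_gt h2pos)] at hmul
    have : (0 : ℝ) < (1 / 2 : ℝ) ^ om * ((4 : ℝ) ^ r - 1) - (2 : ℝ) ^ om * G := by
      rw [hhalf]
      linarith
    linarith
  have hcpos : 0 < count := by exact_mod_cast hfin
  obtain ⟨x, hx⟩ := Finset.card_pos.mp hcpos
  rw [Finset.mem_filter] at hx
  have hxS := hx.1
  rw [hSdef, Finset.mem_filter] at hxS
  refine ⟨x, ⟨hx.2.1.ne_zero, hxS.2⟩, ?_⟩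
  rw [← hn]
  exact hx.2.2

lemma nat_ineq : ∀ r : ℕ, 14 ≤ r → 3 * 230411 ^ r ≤ 250000 ^ r := by
  intro r hr
  induction r, hr using Nat.le_induction with
  | base => norm_num
  | succ n hn ih =>
    rw [pow_succ, pow_succ, ← mul_assoc]
    calc 3 * 230411 ^ n * 230411 ≤ 250000 ^ n * 230411 := Nat.mul_le_mul_right _ ih
      _ ≤ 250000 ^ n * 250000 := Nat.mul_le_mul_left _ (by norm_num)

end Prim5

/-- Theorem 3.3 for `q = 5`: for all sufficiently large `r`, any set `S_C∗` obtained by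
removing `r` affine hyperplanes in general position (given by a basis and prescribed
coordinates) from `𝔽_{q^r}` contains a primitive element. -/
theorem primitive_element_exists_q5 (F : Type) [Field F] [Fintype F]
    (hF : Fintype.card F = 5) :
    ∃ r0 : ℕ, 2 ≤ r0 ∧ ∀ r : ℕ, r0 ≤ r →
      ∀ (E : Type) [Field E] [Fintype E] [Algebra F E],
        ∀ (B : Module.Basis (Fin r) F E) (c : Fin r → F),
          ∃ x : E, (x ≠ 0 ∧ ∀ i, B.repr x i ≠ c i) ∧ orderOf x = 5 ^ r - 1 := by
  classical
  obtain ⟨R, hR⟩ := Prim5.omega_small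
  refine ⟨max (max R 64) 2, le_max_right _ _, ?_⟩
  intro r hr E _ _ _ B c
  letI : DecidableEq F := Classical.decEq F
  letI : DecidableEq E := Classical.decEq E
  have hr64 : 64 ≤ r := le_trans (le_trans (le_max_right R 64) (le_max_left _ 2)) hr
  have hrR : R ≤ r := le_trans (le_trans (le_max_left R 64) (le_max_left _ 2)) hr
  have hr1 : 1 ≤ r := by omega
  apply Prim5.main_lemma hF hr1 B c
  have h5r : (5 : ℕ) ≤ 5 ^ r := by
    calc (5 : ℕ) = 5 ^ 1 := (pow_one 5).symm
      _ ≤ 5 ^ r := Nat.pow_le_pow_right (by norm_num) hr1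
  have hn0 : (5 ^ r - 1 : ℕ) ≠ 0 := by omega
  have hn5 : (5 ^ r - 1 : ℕ) ≤ 5 ^ r := by omega
  have hω := hR r hrR (5 ^ r - 1) hn0 hn5
  set om := (5 ^ r - 1 : ℕ).primeFactors.card with hωdef
  have h2 : (2 : ℝ) ^ om * ((2 : ℝ) ^ om * ((8 / 5 : ℝ) ^ r * Real.sqrt ((5 : ℝ) ^ r)))
      = (4 : ℝ) ^ om * ((8 / 5 : ℝ) ^ r * Real.sqrt ((5 : ℝ) ^ r)) := by
    rw [← mul_assoc, ← mul_pow]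
    norm_num
  have hsqrt : Real.sqrt ((5 : ℝ) ^ r) ≤ (2237 / 1000 : ℝ) ^ r := by
    rw [Real.sqrt_le_left (by positivity)]
    rw [← pow_mul, mul_comm r 2, pow_mul]
    exact pow_le_pow_left₀ (by positivity) (by norm_num) r
  have h4ω : (4 : ℝ) ^ om ≤ (103 / 100 : ℝ) ^ r := by
    calc (4 : ℝ) ^ om ≤ ((103 / 100 : ℝ) ^ 50) ^ om := by
          apply pow_le_pow_left₀ (by norm_num) ?_ om
          norm_num
      _ = (103 / 100 : ℝ) ^ (50 * om) := by rw [← pow_mul]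
      _ ≤ (103 / 100 : ℝ) ^ r := by
          apply pow_le_pow_right₀ (by norm_num) (by omega)
  have hβ : ((103 / 100 : ℝ) ^ r) * ((8 / 5 : ℝ) ^ r * (2237 / 1000 : ℝ) ^ r)
      = ((230411 / 62500 : ℝ)) ^ r := by
    rw [← mul_pow, ← mul_pow]
    norm_num
  have hfin1 : (2 : ℝ) ^ om * ((2 : ℝ) ^ om * ((8 / 5 : ℝ) ^ r * Real.sqrt ((5 : ℝ) ^ r)))
      ≤ (230411 / 62500 : ℝ) ^ r := by
    rw [h2, ← hβ]
    apply mul_le_mul h4ω ?_ (by positivity) (by positivity)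
    exact mul_le_mul_of_nonneg_left hsqrt (by positivity)
  have hnat := Prim5.nat_ineq r (by omega)
  have h3β : 3 * (230411 / 62500 : ℝ) ^ r ≤ (4 : ℝ) ^ r := by
    have h1 : ((3 : ℝ) * 230411 ^ r) ≤ (250000 : ℝ) ^ r := by exact_mod_cast hnat
    have h62 : (0 : ℝ) < (62500 : ℝ) ^ r := by positivity
    rw [div_pow, ← mul_div_assoc, div_le_iff₀ h62]
    calc 3 * (230411 : ℝ) ^ r ≤ (250000 : ℝ) ^ r := h1
      _ = (4 : ℝ) ^ r * (62500 : ℝ) ^ r := by rw [← mul_pow]; norm_num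
  have h1β : (1 : ℝ) ≤ (230411 / 62500 : ℝ) ^ r := by
    calc (1 : ℝ) = 1 ^ r := (one_pow r).symm
      _ ≤ (230411 / 62500 : ℝ) ^ r := pow_le_pow_left₀ (by norm_num) (by norm_num) r
  calc (2 : ℝ) ^ om * ((2 : ℝ) ^ om * ((8 / 5 : ℝ) ^ r * Real.sqrt ((5 : ℝ) ^ r)))
      ≤ (230411 / 62500 : ℝ) ^ r := hfin1
    _ < (4 : ℝ) ^ r - 1 := by linarith
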